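/- Let G be a finite group acting transitively and faithfully with fixity 2 on a finite set Ω, let N be an abelian minimal normal subgroup of G that acts semi-regularly on Ω, and let Ω̄ be the set of N-orbits. Then the induced action of G/N on Ω̄ has fixity at most 2, i.e., no nontrivial element of G/N fixes three or more N-orbits. -/

import Mathlib

open MulAction Pointwise

def HasFixity (G Ω : Type*) [Group G] [MulAction G Ω] (k : ℕ) : Prop :=
  (∀ g : G, g ≠ 1 → (fixedBy Ω g).ncard ≤ k) ∧ ∃ g : G, g ≠ 1 ∧ (fixedBy Ω g).ncard = k

def IsSemiregular (G Ω : Type*) [Group G] [MulAction G Ω] (N : Subgroup G) : Prop :=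
  ∀ n ∈ N, n ≠ 1 → ∀ ω : Ω, n • ω ≠ ω

def IsMinimalNormal (G : Type*) [Group G] (N : Subgroup G) : Prop :=
  N.Normal ∧ N ≠ ⊥ ∧ ∀ M : Subgroup G, M.Normal → M ≤ N → M = ⊥ ∨ M = N

def IsOrbitOf (G Ω : Type*) [Group G] [MulAction G Ω] (N : Subgroup G) (s : Set Ω) : Prop :=
  ∃ ω : Ω, s = MulAction.orbit N ω

def IsRegularOn (G Ω : Type*) [Group G] [MulAction G Ω] (R : Subgroup G) : Prop :=
  (∀ ω ω' : Ω, ∃ r ∈ R, r • ω = ω') ∧ ∀ r ∈ R, r ≠ 1 → ∀ ω : Ω, r • ω ≠ ω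

def IsFrobeniusOn (G Ω : Type*) [Group G] [MulAction G Ω] (F : Subgroup G) (s : Set Ω) : Prop :=
  (∃ f ∈ F, f ≠ 1 ∧ ∃ ω ∈ s, f • ω = ω) ∧
  ∀ f ∈ F, f ≠ 1 → ∀ ω ∈ s, ∀ ω' ∈ s, f • ω = ω → f • ω' = ω' → ω = ω'

theorem stmt_4 (G Ω : Type*) [Group G] [Finite G] [MulAction G Ω] [Finite Ω]
    [FaithfulSMul G Ω] [IsPretransitive G Ω] (hfix : HasFixity G Ω 2)
    (N : Subgroup G) (hmin : IsMinimalNormal G N) (hab : ∀ x ∈ N, ∀ y ∈ N, x * y = y * x)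
    (hsemi : IsSemiregular G Ω N) :
    ∀ g : G, g ∉ N → {s : Set Ω | IsOrbitOf G Ω N s ∧ g • s = s}.ncard ≤ 2 := by
  classical
  intro g hg
  by_contra hcon
  push_neg at hcon
  set S := {s : Set Ω | IsOrbitOf G Ω N s ∧ g • s = s} with hS
  obtain ⟨T, hTS, hT3⟩ := Set.exists_subset_card_eq (s := S) (n := 3) (by omega)
  rw [Set.ncard_eq_three] at hT3
  obtain ⟨s₁, s₂, s₃, h12, h13, h23, rfl⟩ := hT3
  have hs₁ : s₁ ∈ S := hTS (by simp)
  have hs₂ : s₂ ∈ S := hTS (by simp)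
  have hs₃ : s₃ ∈ S := hTS (by simp)
  -- orbits have cardinality Nat.card N
  have horb : ∀ ω : Ω, (orbit N ω).ncard = Nat.card N := by
    intro ω
    rw [← Nat.card_coe_set_eq]
    have hinj : Function.Injective (fun n : N => n • ω) := by
      intro n m h
      by_contra hne
      refine hsemi ((m : G)⁻¹ * n) (mul_mem (inv_mem m.2) n.2) ?_ ω ?_
      · intro h1
        apply hne
        have : (m : G)⁻¹ * n = ((m⁻¹ * n : N) : G) := rfl
        rw [this] at h1
        have : (m⁻¹ * n : N) = 1 := by exact_mod_cast h1
        have := mul_eq_one_iff_eq_inv.mp this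
        simpa [inv_inv, eq_comm] using congrArg (·⁻¹) this
      · have hm : (m : G) • ω = (n : G) • ω := h.symm
        rw [mul_smul, ← hm, inv_smul_smul]
    exact (Nat.card_range_of_injective hinj).symm ▸ rfl
  -- distinct orbits are disjoint
  have hdis : ∀ s t : Set Ω, IsOrbitOf G Ω N s → IsOrbitOf G Ω N t → s ≠ t → Disjoint s t := by
    rintro s t ⟨ω, rfl⟩ ⟨ω', rfl⟩ hne
    rw [Set.disjoint_left]
    intro x hx hx'
    exact hne ((orbit_eq_iff.mpr hx).symm.trans (orbit_eq_iff.mpr hx'))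
  have npos : 0 < Nat.card N := Nat.card_pos
  -- key: every point in a g-fixed orbit is fixed by some element of the coset gN
  have hkey : ∀ s ∈ S, ∀ ω ∈ s, ∃ n ∈ N, (g * n) • ω = ω := by
    rintro s ⟨⟨ω₀, rfl⟩, hgs⟩ ω hω
    have hω' : ω ∈ g • orbit N ω₀ := hgs.symm ▸ hω
    obtain ⟨z, hz, rfl⟩ := hω'
    have hzo : z ∈ orbit N (g • z) := by
      rw [← orbit_eq_iff.mpr hω] at hz; exact hz
    obtain ⟨n, hn⟩ := hzo
    refine ⟨n, n.2, ?_⟩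
    have hn' : (n : G) • (g • z) = z := hn
    rw [mul_smul, hn']
  -- the union of the three orbits
  set U : Set Ω := s₁ ∪ s₂ ∪ s₃ with hU
  have hmemS : ∀ ω ∈ U, ∃ n ∈ N, (g * n) • ω = ω := by
    intro ω hω
    rcases hω with (h | h) | h
    · exact hkey s₁ hs₁ ω h
    · exact hkey s₂ hs₂ ω h
    · exact hkey s₃ hs₃ ω h
  set F : Ω → G := fun ω => if h : ∃ n ∈ N, (g * n) • ω = ω then g * h.choose else 1 with hF
  set C : Set G := (fun n => g * n) '' (N : Set G) with hC
  have hFC : ∀ ω ∈ U, F ω ∈ C ∧ F ω • ω = ω := by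
    intro ω hω
    have h := hmemS ω hω
    simp only [hF, dif_pos h]
    exact ⟨⟨h.choose, h.choose_spec.1, rfl⟩, h.choose_spec.2⟩
  -- cardinalities
  have hCcard : C.ncard = Nat.card N := by
    rw [hC, Set.ncard_image_of_injective _ (mul_right_injective g), ← Nat.card_coe_set_eq]
    rfl
  have hUcard : U.ncard = 3 * Nat.card N := by
    obtain ⟨⟨ω₁, rfl⟩, -⟩ := hs₁
    obtain ⟨⟨ω₂, rfl⟩, -⟩ := hs₂
    obtain ⟨⟨ω₃, rfl⟩, -⟩ := hs₃
    rw [hU, Set.ncard_union_eq, Set.ncard_union_eq, horb, horb, horb]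
    · ring
    · exact hdis _ _ ⟨ω₁, rfl⟩ ⟨ω₂, rfl⟩ h12
    · exact Set.disjoint_union_left.mpr
        ⟨hdis _ _ ⟨ω₁, rfl⟩ ⟨ω₃, rfl⟩ h13, hdis _ _ ⟨ω₂, rfl⟩ ⟨ω₃, rfl⟩ h23⟩
  -- pigeonhole
  have := Fintype.ofFinite Ω
  have := Fintype.ofFinite G
  have hmaps : ∀ ω ∈ U.toFinset, F ω ∈ C.toFinset := by
    intro ω hω
    rw [Set.mem_toFinset] at *
    exact (hFC ω hω).1
  have hlt : C.toFinset.card * 2 < U.toFinset.card := by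
    rw [← Set.ncard_eq_toFinset_card', ← Set.ncard_eq_toFinset_card', hCcard, hUcard]
    omega
  obtain ⟨y, hyC, hy2⟩ := Finset.exists_lt_card_fiber_of_mul_lt_card_of_maps_to hmaps hlt
  rw [Finset.two_lt_card_iff] at hy2
  obtain ⟨a, b, c, ha, hb, hc, hab', hac', hbc'⟩ := hy2
  simp only [Finset.mem_filter, Set.mem_toFinset] at ha hb hc
  have hy1 : y ≠ 1 := by
    rw [Set.mem_toFinset, hC] at hyC
    obtain ⟨n, hn, rfl⟩ := hyC
    intro h
    exact hg (by rw [show g = n⁻¹ from eq_inv_of_mul_eq_one_left h]; exact inv_mem hn)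
  have hfp : ∀ x, x ∈ U ∧ F x = y → x ∈ fixedBy Ω y := fun x hx =>
    mem_fixedBy.mpr (hx.2 ▸ (hFC x hx.1).2)
  have hfix3 : ({a, b, c} : Set Ω) ⊆ fixedBy Ω y := by
    rintro x (rfl | rfl | rfl)
    · exact hfp _ ha
    · exact hfp _ hb
    · exact hfp _ hc
  have h3 : ({a, b, c} : Set Ω).ncard = 3 := Set.ncard_eq_three.mpr ⟨a, b, c, hab', hac', hbc', rfl⟩
  have := Set.ncard_le_ncard hfix3 (Set.toFinite _)
  have := hfix.1 y hy1
  omega
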